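/- For every term t of the free algebra F_⊗(V) on one n-ary operation, the rank R(t) is zero if and only if t equals its left-most bracketing lmb(t). -/
import Mathlib


/-- Terms of the free algebra on one `n`-ary operation. -/
inductive CTerm (V : Type*) (n : ℕ) : Type _
  | var : V → CTerm V n
  | op : (Fin n → CTerm V n) → CTerm V n

namespace CTerm

variable {V : Type*} {n : ℕ}

/-- The term `⊗(s_0,…,s_{p-1}, ⊗(s_p,…,s_{p+n-1}), s_{p+n},…,s_{2n-2})`:
the outer `n`-ary bracketing of the `2n-1` terms `s` with an inner bracket
("pivot") at (0-based) position `p`. -/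
def catAt (p : ℕ) (_hp : p < n) (s : Fin (2 * n - 1) → CTerm V n) : CTerm V n :=
  .op fun q =>
    if (q : ℕ) < p then s ⟨q, by have := q.isLt; omega⟩
    else if (q : ℕ) = p then
      .op fun k => s ⟨p + k, by have := q.isLt; have := k.isLt; omega⟩
    else s ⟨(q : ℕ) + n - 1, by have := q.isLt; omega⟩

/-- The underlying list of variables of a term. -/
def U : CTerm V n → List V
  | .var v => [v]
  | .op f => (List.ofFn fun i => U (f i)).flatten

/-- Left-most bracketing of a nonempty list of terms (head + tail). -/
def lmbAux : CTerm V n → List (CTerm V n) → CTerm V n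
  | t, [] => t
  | t, r :: rs =>
    if h : 2 ≤ n ∧ n ≤ rs.length + 2 then
      lmbAux (.op fun i => (t :: r :: rs).getD i t) ((r :: rs).drop (n - 1))
    else t
  termination_by _ l => l.length
  decreasing_by simp [List.length_drop]; omega

/-- Left-most bracketing of a term. -/
def lmb (t : CTerm V n) : CTerm V n :=
  match (U t).map (CTerm.var (n := n)) with
  | [] => t
  | h :: tl => lmbAux h tl

/-- Length of a term. -/
def L : CTerm V n → ℕ
  | .var _ => 1
  | .op f => ∑ i, L (f i)

/-- Rank of a term. -/
def R : CTerm V n → ℤ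
  | .var _ => 0
  | .op f => (∑ i, R (f i)) + (∑ i : Fin n, ((i : ℕ) : ℤ) * (L (f i) : ℤ)) - (n * (n - 1) : ℤ) / 2

end CTerm

/-- The `n`-Catalan congruence on `CTerm V n`. -/
inductive CatRel (V : Type*) (n : ℕ) : CTerm V n → CTerm V n → Prop
  | refl (t) : CatRel V n t t
  | symm {t t'} : CatRel V n t t' → CatRel V n t' t
  | trans {t t' t''} : CatRel V n t t' → CatRel V n t' t'' → CatRel V n t t''
  | compat {f g : Fin n → CTerm V n} :
      (∀ j, CatRel V n (f j) (g j)) → CatRel V n (.op f) (.op g)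
  | assoc (i : ℕ) (hi : i + 1 < n) (s : Fin (2 * n - 1) → CTerm V n) :
      CatRel V n (CTerm.catAt (i + 1) hi s) (CTerm.catAt i (by omega) s)

/-- The symmetric `n`-Catalan congruence on `CTerm V n`. -/
inductive SymCatRel (V : Type*) (n : ℕ) : CTerm V n → CTerm V n → Prop
  | refl (t) : SymCatRel V n t t
  | symm {t t'} : SymCatRel V n t t' → SymCatRel V n t' t
  | trans {t t' t''} : SymCatRel V n t t' → SymCatRel V n t' t'' → SymCatRel V n t t''
  | compat {f g : Fin n → CTerm V n} :
      (∀ j, SymCatRel V n (f j) (g j)) → SymCatRel V n (.op f) (.op g)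
  | assoc (i : ℕ) (hi : i + 1 < n) (s : Fin (2 * n - 1) → CTerm V n) :
      SymCatRel V n (CTerm.catAt (i + 1) hi s) (CTerm.catAt i (by omega) s)
  | swap (i : ℕ) (hi : i + 1 < n) (s : Fin n → CTerm V n) :
      SymCatRel V n (.op s) (.op (s ∘ Equiv.swap ⟨i, by omega⟩ ⟨i + 1, hi⟩))

namespace CTerm

variable {V : Type*} {n : ℕ}

/-- A term is a left comb. -/
def IsComb : CTerm V n → Prop
  | .var _ => True
  | .op f => (∀ i : Fin n, (i : ℕ) ≠ 0 → ∃ v, f i = .var v) ∧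
      ∀ i : Fin n, (i : ℕ) = 0 → IsComb (f i)

lemma one_le_L (hn : 1 ≤ n) (t : CTerm V n) : 1 ≤ t.L := by
  induction t with
  | var v => simp [L]
  | op f ih =>
    rw [L]
    exact le_trans (ih ⟨0, hn⟩)
      (Finset.single_le_sum (f := fun i => L (f i)) (fun i _ => Nat.zero_le _)
        (Finset.mem_univ _))

lemma eq_var_of_L_eq_one (hn : 2 ≤ n) (t : CTerm V n) (h : t.L = 1) : ∃ v, t = var v := by
  cases t with
  | var v => exact ⟨v, rfl⟩
  | op f =>
    exfalso
    rw [L] at h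
    have h2 : n ≤ ∑ i, L (f i) := by
      have := Finset.sum_le_sum (s := (Finset.univ : Finset (Fin n)))
        (f := fun _ : Fin n => 1) (g := fun i => L (f i))
        (fun i _ => one_le_L (by omega) (f i))
      simpa using this
    omega

lemma length_U (hn : 1 ≤ n) (t : CTerm V n) : (U t).length = t.L := by
  induction t with
  | var v => simp [U, L]
  | op f ih => simp [U, L, List.length_flatten, List.map_ofFn, List.sum_ofFn, ih]

lemma L_mod (hn : 2 ≤ n) (t : CTerm V n) : ∃ k, t.L = k * (n - 1) + 1 := by
  induction t with
  | var v => exact ⟨0, by simp [L]⟩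
  | op f ih =>
    choose k hk using ih
    refine ⟨(∑ i, k i) + 1, ?_⟩
    rw [L]
    have h1 : ∑ i, L (f i) = ∑ i, (k i * (n - 1) + 1) := Finset.sum_congr rfl fun i _ => hk i
    rw [h1, Finset.sum_add_distrib, ← Finset.sum_mul]
    simp only [Finset.sum_const, Finset.card_univ, Fintype.card_fin, smul_eq_mul, mul_one]
    rw [add_mul, one_mul]
    omega

lemma gauss (n : ℕ) : ((n : ℤ) * ((n : ℤ) - 1)) / 2 = ∑ i : Fin n, ((i : ℕ) : ℤ) := by
  induction n with
  | zero => simp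
  | succ m ih =>
    rw [Fin.sum_univ_castSucc]
    simp only [Fin.coe_castSucc, Fin.val_last]
    rw [← ih]
    push_cast
    rw [show ((m : ℤ) + 1) * ((m : ℤ) + 1 - 1) = (m : ℤ) * ((m : ℤ) - 1) + (m : ℤ) * 2 by ring,
      Int.add_mul_ediv_right _ _ (by norm_num : (2 : ℤ) ≠ 0)]

lemma R_op_eq (f : Fin n → CTerm V n) :
    R (.op f) = (∑ i, R (f i)) + ∑ i : Fin n, ((i : ℕ) : ℤ) * ((L (f i) : ℤ) - 1) := by
  rw [R]
  rw [show ((n : ℤ) * ((n : ℤ) - 1)) / 2 = ∑ i : Fin n, ((i : ℕ) : ℤ) from gauss n]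
  have : ∀ i : Fin n, ((i : ℕ) : ℤ) * ((L (f i) : ℤ) - 1)
      = ((i : ℕ) : ℤ) * (L (f i) : ℤ) - ((i : ℕ) : ℤ) := fun i => by ring
  simp only [this, Finset.sum_sub_distrib]
  ring

lemma R_nonneg (hn : 2 ≤ n) (t : CTerm V n) : 0 ≤ t.R := by
  induction t with
  | var v => simp [R]
  | op f ih =>
    rw [R_op_eq]
    have h1 : 0 ≤ ∑ i, R (f i) := Finset.sum_nonneg fun i _ => ih i
    have h2 : 0 ≤ ∑ i : Fin n, ((i : ℕ) : ℤ) * ((L (f i) : ℤ) - 1) := by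
      refine Finset.sum_nonneg fun i _ => mul_nonneg (by positivity) ?_
      have := one_le_L (by omega) (f i)
      have : (1 : ℤ) ≤ (L (f i) : ℤ) := by exact_mod_cast this
      omega
    omega

lemma R_eq_zero_iff_isComb (hn : 2 ≤ n) (t : CTerm V n) : t.R = 0 ↔ IsComb t := by
  induction t with
  | var v => simp [R, IsComb]
  | op f ih =>
    rw [R_op_eq, IsComb]
    constructor
    · intro h
      have hsum : ∑ i : Fin n, (R (f i) + ((i : ℕ) : ℤ) * ((L (f i) : ℤ) - 1)) = 0 := by
        rw [Finset.sum_add_distrib]; exact h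
      have hterm : ∀ i : Fin n, R (f i) + ((i : ℕ) : ℤ) * ((L (f i) : ℤ) - 1) = 0 := by
        intro i
        refine (Finset.sum_eq_zero_iff_of_nonneg fun j _ => ?_).mp hsum i (Finset.mem_univ i)
        have hr := R_nonneg hn (f j)
        have hl : (1 : ℤ) ≤ (L (f j) : ℤ) := by exact_mod_cast one_le_L (by omega) (f j)
        have : 0 ≤ ((j : ℕ) : ℤ) * ((L (f j) : ℤ) - 1) :=
          mul_nonneg (by positivity) (by omega)
        omega
      have hz : ∀ i : Fin n, R (f i) = 0 ∧ ((i : ℕ) : ℤ) * ((L (f i) : ℤ) - 1) = 0 := by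
        intro i
        have h1 := hterm i
        have hr := R_nonneg hn (f i)
        have hl : (1 : ℤ) ≤ (L (f i) : ℤ) := by exact_mod_cast one_le_L (by omega) (f i)
        have h2 : 0 ≤ ((i : ℕ) : ℤ) * ((L (f i) : ℤ) - 1) :=
          mul_nonneg (by positivity) (by omega)
        constructor <;> omega
      refine ⟨fun i hi => ?_, fun i _ => (ih i).mp (hz i).1⟩
      have h2 := (hz i).2
      have hi' : ((i : ℕ) : ℤ) ≠ 0 := by exact_mod_cast hi
      have : (L (f i) : ℤ) - 1 = 0 := by
        rcases mul_eq_zero.mp h2 with h | h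
        · exact absurd h hi'
        · exact h
      have : L (f i) = 1 := by omega
      exact eq_var_of_L_eq_one hn (f i) this
    · rintro ⟨hvar, hcomb⟩
      have h1 : ∀ i : Fin n, R (f i) = 0 := by
        intro i
        by_cases hi : (i : ℕ) = 0
        · exact (ih i).mpr (hcomb i hi)
        · obtain ⟨v, hv⟩ := hvar i hi
          rw [hv, R]
      have h2 : ∀ i : Fin n, ((i : ℕ) : ℤ) * ((L (f i) : ℤ) - 1) = 0 := by
        intro i
        by_cases hi : (i : ℕ) = 0
        · simp [hi]
        · obtain ⟨v, hv⟩ := hvar i hi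
          rw [hv, L]
          simp
      simp [Finset.sum_congr rfl fun i _ => h1 i, Finset.sum_congr rfl fun i _ => h2 i]

lemma lmbAux_nil (t : CTerm V n) : lmbAux t [] = t := by rw [lmbAux]

lemma lmbAux_of_length (hn : 2 ≤ n) (t : CTerm V n) (l : List (CTerm V n))
    (hl : l.length = n - 1) :
    lmbAux t l = .op (fun i => (t :: l).getD i t) := by
  match l, hl with
  | [], hl => exact absurd hl (by simp; omega)
  | r :: rs, hl =>
    rw [lmbAux]
    simp only [List.length_cons] at hl
    rw [dif_pos ⟨hn, by omega⟩]
    have hdrop : (r :: rs).drop (n - 1) = [] := by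
      apply List.drop_eq_nil_of_le
      simp; omega
    rw [hdrop, lmbAux_nil]

lemma lmbAux_append_aux (hn : 2 ≤ n) (N : ℕ) : ∀ (t : CTerm V n) (l l' : List (CTerm V n)),
    l.length ≤ N → (n - 1) ∣ l.length → lmbAux t (l ++ l') = lmbAux (lmbAux t l) l' := by
  induction N with
  | zero =>
    intro t l l' hlen _
    obtain rfl : l = [] := List.eq_nil_of_length_eq_zero (by omega)
    rw [lmbAux_nil]; rfl
  | succ N IH =>
    intro t l l' hlen hdvd
    rcases l with _ | ⟨r, rs⟩
    · rw [lmbAux_nil]; rfl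
    · have hl' : (n - 1) ∣ rs.length + 1 := by simpa using hdvd
      have hm : n - 1 ≤ rs.length + 1 := Nat.le_of_dvd (by omega) hl'
      show lmbAux t (r :: (rs ++ l')) = lmbAux (lmbAux t (r :: rs)) l'
      rw [lmbAux]
      rw [dif_pos ⟨hn, by simp only [List.length_append]; omega⟩]
      conv_rhs => rw [lmbAux]
      rw [dif_pos ⟨hn, by omega⟩]
      have hfun : (fun i : Fin n => (t :: r :: (rs ++ l')).getD (i : ℕ) t)
          = fun i : Fin n => (t :: r :: rs).getD (i : ℕ) t := by
        funext i
        have h1 : t :: r :: (rs ++ l') = (t :: r :: rs) ++ l' := by simp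
        rw [h1, List.getD_append]
        simp only [List.length_cons]
        have := i.isLt
        omega
      have hdrop : (r :: (rs ++ l')).drop (n - 1) = ((r :: rs).drop (n - 1)) ++ l' := by
        have h1 : r :: (rs ++ l') = (r :: rs) ++ l' := by simp
        rw [h1, List.drop_append_of_le_length (by simp; omega)]
      rw [hfun, hdrop]
      have hlen2 : ((r :: rs).drop (n - 1)).length ≤ N := by
        rw [List.length_drop, List.length_cons]
        simp only [List.length_cons] at hlen
        omega
      have hdvd2 : (n - 1) ∣ ((r :: rs).drop (n - 1)).length := by
        rw [List.length_drop, List.length_cons]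
        exact Nat.dvd_sub hl' dvd_rfl
      exact IH _ _ l' hlen2 hdvd2

lemma lmbAux_append (hn : 2 ≤ n) (t : CTerm V n) (l l' : List (CTerm V n))
    (hl : (n - 1) ∣ l.length) :
    lmbAux t (l ++ l') = lmbAux (lmbAux t l) l' :=
  lmbAux_append_aux hn l.length t l l' le_rfl hl

lemma isComb_lmbAux_aux (hn : 2 ≤ n) (N : ℕ) : ∀ (t : CTerm V n) (l : List (CTerm V n)),
    l.length ≤ N → IsComb t → (∀ x ∈ l, ∃ v, x = var v) → IsComb (lmbAux t l) := by
  induction N with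
  | zero =>
    intro t l hlen ht _
    obtain rfl : l = [] := List.eq_nil_of_length_eq_zero (by omega)
    rw [lmbAux_nil]; exact ht
  | succ N IH =>
    intro t l hlen ht hl
    rcases l with _ | ⟨r, rs⟩
    · rw [lmbAux_nil]; exact ht
    · rw [lmbAux]
      split
      · next hcond =>
        refine IH _ _ ?_ ?_ ?_
        · rw [List.length_drop, List.length_cons]
          simp only [List.length_cons] at hlen
          omega
        · constructor
          · intro i hi
            show ∃ v, (t :: r :: rs).getD (i : ℕ) t = var v
            rcases Nat.exists_eq_succ_of_ne_zero hi with ⟨j, hj⟩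
            have hj1 : j < (r :: rs).length := by
              simp only [List.length_cons]
              have := i.isLt
              omega
            rw [hj, List.getD_cons_succ, List.getD_eq_getElem _ _ hj1]
            exact ⟨_, (hl _ (List.getElem_mem _)).choose_spec⟩
          · intro i hi
            show IsComb ((t :: r :: rs).getD (i : ℕ) t)
            rw [hi, List.getD_cons_zero]
            exact ht
        · intro x hx
          exact hl x (List.mem_of_mem_drop hx)
      · exact ht

lemma isComb_lmbAux (hn : 2 ≤ n) (t : CTerm V n) (ht : IsComb t) (l : List (CTerm V n))
    (hl : ∀ x ∈ l, ∃ v, x = var v) : IsComb (lmbAux t l) :=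
  isComb_lmbAux_aux hn l.length t l le_rfl ht hl

lemma lmb_cons (t : CTerm V n) (h : CTerm V n) (tl : List (CTerm V n))
    (he : (U t).map (var (n := n)) = h :: tl) : lmb t = lmbAux h tl := by
  unfold lmb
  rw [he]

lemma map_var_U_ne_nil (hn : 1 ≤ n) (t : CTerm V n) : (U t).map (var (n := n)) ≠ [] := by
  intro h
  have h2 := congrArg List.length h
  rw [List.length_map, length_U hn, List.length_nil] at h2
  have := one_le_L hn t
  omega

lemma flatten_singletons {α : Type*} (l : List α) : (l.map fun x => [x]).flatten = l := by
  induction l with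
  | nil => rfl
  | cons a l ih => simp [ih]

lemma isComb_lmb (hn : 2 ≤ n) (t : CTerm V n) : IsComb (lmb t) := by
  rcases he : (U t).map (var (n := n)) with _ | ⟨h, tl⟩
  · exact absurd he (map_var_U_ne_nil (by omega) t)
  · rw [lmb_cons t h tl he]
    have hmem : ∀ x ∈ h :: tl, ∃ v, x = var v := by
      intro x hx
      have : x ∈ (U t).map (var (n := n)) := he ▸ hx
      obtain ⟨v, _, hv⟩ := List.mem_map.mp this
      exact ⟨v, hv.symm⟩
    obtain ⟨v, hv⟩ := hmem h (by simp)
    refine isComb_lmbAux hn h (by rw [hv]; trivial) tl fun x hx => hmem x (by simp [hx])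

lemma lmb_eq_of_isComb (hn : 2 ≤ n) (t : CTerm V n) (ht : IsComb t) : lmb t = t := by
  induction t with
  | var v =>
    have he : (U (var (n := n) v)).map (var (n := n)) = [var v] := by simp [U]
    rw [lmb_cons _ _ _ he, lmbAux_nil]
  | op f ih =>
    obtain ⟨m, rfl⟩ : ∃ m, n = m + 2 := ⟨n - 2, by omega⟩
    obtain ⟨hvar, hcomb⟩ := ht
    -- the tail entries are variables
    choose w hw using fun (j : Fin (m + 1)) => hvar j.succ (by simp [Fin.succ])
    have hU : U (op f) = U (f 0) ++ List.ofFn w := by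
      rw [U, List.ofFn_succ]
      simp only [List.flatten_cons]
      congr 1
      have h1 : (List.ofFn fun i : Fin (m + 1) => U (f i.succ))
          = List.ofFn fun i : Fin (m + 1) => [w i] := by
        congr 1
        funext i
        rw [hw i, U]
      rw [h1]
      have h2 : (List.ofFn fun i : Fin (m + 1) => [w i])
          = (List.ofFn w).map (fun x => [x]) := by
        rw [List.map_ofFn]
        rfl
      rw [h2, flatten_singletons]
    rcases he : (U (f 0)).map (var (n := m + 2)) with _ | ⟨h, tl⟩
    · exact absurd he (map_var_U_ne_nil (by omega) (f 0))
    · have hmap : (U (op f)).map (var (n := m + 2))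
          = h :: (tl ++ List.ofFn fun j : Fin (m + 1) => var (w j)) := by
        rw [hU, List.map_append, he, List.map_ofFn]
        simp [Function.comp]
      rw [lmb_cons _ _ _ hmap]
      have hdvd : (m + 2 - 1) ∣ tl.length := by
        obtain ⟨k, hk⟩ := L_mod (by omega) (f 0)
        have hlen : tl.length + 1 = L (f 0) := by
          have := congrArg List.length he
          rw [List.length_map, length_U (by omega)] at this
          simp at this
          omega
        exact ⟨k, by rw [mul_comm]; omega⟩
      rw [lmbAux_append hn h tl _ hdvd]
      have hlmb : lmbAux h tl = f 0 := by
        rw [← lmb_cons _ _ _ he]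
        exact ih 0 (hcomb 0 rfl)
      rw [hlmb]
      rw [lmbAux_of_length hn (f 0) _ (by simp)]
      congr 1
      funext i
      rcases Fin.eq_zero_or_eq_succ i with h0 | ⟨j, hj⟩
      · rw [h0]; rfl
      · rw [hj]
        have : ((j.succ : Fin (m + 2)) : ℕ) = (j : ℕ) + 1 := rfl
        rw [this]
        show (List.ofFn fun j : Fin (m + 1) => var (n := m + 2) (w j)).getD (j : ℕ) (f 0)
            = f j.succ
        rw [List.getD_eq_getElem _ _ (by simp [j.isLt]), List.getElem_ofFn]
        simp [hw]

end CTerm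

/-- STATEMENT 11: the rank of a term is zero iff the term equals its left-most
bracketing. -/
theorem rank_eq_zero_iff_lmb (n : ℕ) (hn : 2 ≤ n) (V : Type*) (t : CTerm V n) :
    CTerm.R t = 0 ↔ t = CTerm.lmb t := by
  rw [CTerm.R_eq_zero_iff_isComb hn]
  constructor
  · intro h
    exact (CTerm.lmb_eq_of_isComb hn t h).symm
  · intro h
    rw [h]
    exact CTerm.isComb_lmb hn t
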